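/- Let G be a graph with n vertices, m ≥ n edges, and maximum degree Δ, and fix a biased orientation of G with indegrees ρ(v). Let v_1, ..., v_s be vertices sampled independently and uniformly at random, and set H := log m − (n/(sm)) Σ_{i=1}^s ρ(v_i) log ρ(v_i). If s ≥ c·(Δ log Δ)²/ε² for a suitable absolute constant c, then with probability at least 2/3, OPT(G) ≤ H + ε and H ≤ OPT(G) + 1 + ε. -/

import Mathlib

open scoped BigOperators ENNReal
open Real Finset MeasureTheory ProbabilityTheory

open Real Finset MeasureTheory ProbabilityTheory

lemma aux_tangent {x d : ℝ} (hx : 0 ≤ x) (hxd : x ≤ d) :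
    x * Real.log d - x * Real.log x ≤ d / 2 + (Real.log 2 - 1) * x := by
  rcases eq_or_lt_of_le hx with h0 | h0
  · rw [← h0]; simp
    linarith
  · have hd : 0 < d := lt_of_lt_of_le h0 hxd
    have h1 : Real.log (d / (2 * x)) ≤ d / (2 * x) - 1 :=
      Real.log_le_sub_one_of_pos (by positivity)
    have h2 : Real.log d - Real.log x = Real.log (d / (2 * x)) + Real.log 2 := by
      rw [Real.log_div hd.ne' (by positivity), Real.log_mul two_ne_zero h0.ne']
      ring
    have h3 : x * (d / (2 * x)) = d / 2 := by field_simp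
    nlinarith [mul_le_mul_of_nonneg_left h1 hx]

lemma aux_entropy_eq {V : Type} [Fintype V] (r : V → ℕ) (m : ℕ) (hm : 0 < m)
    (hsum : ∑ v, r v = m) :
    -∑ v : V, ((r v : ℝ) / m) * Real.logb 2 ((r v : ℝ) / m)
      = Real.logb 2 m - (1 / m) * ∑ v : V, (r v : ℝ) * Real.logb 2 (r v) := by
  have hm' : (m : ℝ) ≠ 0 := Nat.cast_ne_zero.mpr hm.ne'
  have key : ∀ v : V, -(((r v : ℝ) / m) * Real.logb 2 ((r v : ℝ) / m))
      = Real.logb 2 m * ((r v : ℝ) / m) - (1 / m) * ((r v : ℝ) * Real.logb 2 (r v)) := by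
    intro v
    rcases Nat.eq_zero_or_pos (r v) with h | h
    · simp [h]
    · have h0 : ((r v : ℝ)) ≠ 0 := Nat.cast_ne_zero.mpr h.ne'
      rw [Real.logb_div h0 hm']
      field_simp
      ring
  rw [← Finset.sum_neg_distrib]
  rw [Finset.sum_congr rfl (fun v _ => key v), Finset.sum_sub_distrib]
  rw [← Finset.mul_sum, ← Finset.mul_sum, ← Finset.sum_div]
  have : ∑ v : V, (r v : ℝ) = m := by
    rw [← Nat.cast_sum, hsum]
  rw [this, div_self hm', mul_one]

lemma aux_indeg_le_deg {V : Type} [Fintype V] [DecidableEq V] (G : SimpleGraph V)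
    [DecidableRel G.Adj] (g : Sym2 V → V) (hg : ∀ e ∈ G.edgeFinset, g e ∈ e) (v : V) :
    (G.edgeFinset.filter (fun e => g e = v)).card ≤ G.degree v := by
  rw [← SimpleGraph.card_incidenceFinset_eq_degree]
  apply Finset.card_le_card
  intro e he
  rw [Finset.mem_filter] at he
  rw [SimpleGraph.mem_incidenceFinset]
  exact ⟨SimpleGraph.mem_edgeFinset.mp he.1, he.2 ▸ hg e he.1⟩

lemma aux_sum_indeg {V : Type} [Fintype V] [DecidableEq V] (G : SimpleGraph V)
    [DecidableRel G.Adj] (g : Sym2 V → V) :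
    ∑ v : V, (G.edgeFinset.filter (fun e => g e = v)).card = G.edgeFinset.card :=
  (Finset.card_eq_sum_card_fiberwise (fun e _ => Finset.mem_univ (g e))).symm

lemma aux_fiber {V : Type} [Fintype V] [DecidableEq V] (G : SimpleGraph V)
    [DecidableRel G.Adj] (g : Sym2 V → V) (F : V → ℝ) :
    ∑ v : V, ((G.edgeFinset.filter (fun e => g e = v)).card : ℝ) * F v
      = ∑ e ∈ G.edgeFinset, F (g e) := by
  rw [← Finset.sum_fiberwise_of_maps_to (fun e _ => Finset.mem_univ (g e)) (fun e => F (g e))]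
  refine Finset.sum_congr rfl fun v _ => ?_
  rw [Finset.sum_congr rfl (fun e he => by
    rw [(Finset.mem_filter.mp he).2]), Finset.sum_const, nsmul_eq_mul]

set_option linter.unnecessarySeqFocus false in
lemma aux_deg_le {V : Type} [Fintype V] [DecidableEq V] (G : SimpleGraph V)
    [DecidableRel G.Adj] (f f' : Sym2 V → V)
    (hf : ∀ e ∈ G.edgeFinset, f e ∈ e)
    (hbias : ∀ v w, G.Adj v w → G.degree w < G.degree v → f s(v, w) = v)
    (hf' : ∀ e ∈ G.edgeFinset, f' e ∈ e)
    (e : Sym2 V) (he : e ∈ G.edgeFinset) : G.degree (f' e) ≤ G.degree (f e) := by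
  induction e using Sym2.inductionOn with
  | hf a b =>
    have hadj : G.Adj a b := SimpleGraph.mem_edgeFinset.mp he
    have h1 : f' s(a, b) = a ∨ f' s(a, b) = b := Sym2.mem_iff.mp (hf' _ he)
    have h2 : f s(a, b) = a ∨ f s(a, b) = b := Sym2.mem_iff.mp (hf _ he)
    rcases lt_trichotomy (G.degree a) (G.degree b) with h | h | h
    · have hb : f s(a, b) = b := by
        have := hbias b a hadj.symm h
        rwa [Sym2.eq_swap] at this
      rw [hb]
      rcases h1 with h1 | h1 <;> rw [h1] <;> exact h.le
    · rcases h1 with h1 | h1 <;> rcases h2 with h2 | h2 <;> rw [h1, h2] <;> omega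
    · have ha : f s(a, b) = a := hbias a b hadj h
      rw [ha]
      rcases h1 with h1 | h1 <;> rw [h1] <;> exact h.le

lemma aux_deg_pos {V : Type} [Fintype V] [DecidableEq V] (G : SimpleGraph V)
    [DecidableRel G.Adj] (e : Sym2 V) (he : e ∈ G.edgeFinset) {v : V} (hv : v ∈ e) :
    0 < G.degree v := by
  induction e using Sym2.inductionOn with
  | hf a b =>
    have hadj : G.Adj a b := SimpleGraph.mem_edgeFinset.mp he
    rcases Sym2.mem_iff.mp hv with rfl | rfl
    · exact (SimpleGraph.degree_pos_iff_exists_adj _ _).mpr ⟨b, hadj⟩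
    · exact (SimpleGraph.degree_pos_iff_exists_adj _ _).mpr ⟨a, hadj.symm⟩

lemma aux_key {V : Type} [Fintype V] [DecidableEq V] (G : SimpleGraph V)
    [DecidableRel G.Adj] (f f' : Sym2 V → V)
    (hf : ∀ e ∈ G.edgeFinset, f e ∈ e)
    (hbias : ∀ v w, G.Adj v w → G.degree w < G.degree v → f s(v, w) = v)
    (hf' : ∀ e ∈ G.edgeFinset, f' e ∈ e) :
    ∑ v : V, ((G.edgeFinset.filter (fun e => f' e = v)).card : ℝ) *
        Real.logb 2 ((G.edgeFinset.filter (fun e => f' e = v)).card : ℝ)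
      ≤ (∑ v : V, ((G.edgeFinset.filter (fun e => f e = v)).card : ℝ) *
        Real.logb 2 ((G.edgeFinset.filter (fun e => f e = v)).card : ℝ)) + G.edgeFinset.card := by
  set m : ℕ := G.edgeFinset.card with hm
  set ρ : V → ℕ := fun v => (G.edgeFinset.filter (fun e => f e = v)).card with hρ
  set ρ' : V → ℕ := fun v => (G.edgeFinset.filter (fun e => f' e = v)).card with hρ'
  have hlog2 : (0:ℝ) < Real.log 2 := Real.log_pos one_lt_two
  have step1 : ∑ v : V, (ρ' v : ℝ) * Real.logb 2 (ρ' v)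
      ≤ ∑ v : V, (ρ' v : ℝ) * Real.logb 2 (G.degree v) := by
    refine Finset.sum_le_sum fun v _ => ?_
    rcases Nat.eq_zero_or_pos (ρ' v) with h | h
    · simp [h]
    · refine mul_le_mul_of_nonneg_left ?_ (Nat.cast_nonneg _)
      refine Real.logb_le_logb_of_le one_lt_two (by exact_mod_cast h) ?_
      exact_mod_cast aux_indeg_le_deg G f' hf' v
  have step3 : ∑ v : V, (ρ' v : ℝ) * Real.logb 2 (G.degree v)
      ≤ ∑ v : V, (ρ v : ℝ) * Real.logb 2 (G.degree v) := by
    rw [hρ, hρ', aux_fiber G f' (fun v => Real.logb 2 (G.degree v)),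
      aux_fiber G f (fun v => Real.logb 2 (G.degree v))]
    refine Finset.sum_le_sum fun e he => ?_
    refine Real.logb_le_logb_of_le one_lt_two ?_ ?_
    · exact_mod_cast aux_deg_pos G e he (hf' e he)
    · exact_mod_cast aux_deg_le G f f' hf hbias hf' e he
  have hsum_deg : ∑ v : V, (G.degree v : ℝ) = 2 * m := by
    rw [← Nat.cast_sum]
    exact_mod_cast congrArg Nat.cast (G.sum_degrees_eq_twice_card_edges)
  have hsum_ρ : ∑ v : V, (ρ v : ℝ) = m := by
    rw [← Nat.cast_sum]
    exact_mod_cast congrArg Nat.cast (aux_sum_indeg G f)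
  have step5 : ∑ v : V, (ρ v : ℝ) * Real.logb 2 (G.degree v)
      ≤ (∑ v : V, (ρ v : ℝ) * Real.logb 2 (ρ v)) + m := by
    have hterm : ∀ v : V, (ρ v : ℝ) * Real.logb 2 (G.degree v) - (ρ v : ℝ) * Real.logb 2 (ρ v)
        ≤ ((G.degree v : ℝ) / 2 + (Real.log 2 - 1) * (ρ v : ℝ)) / Real.log 2 := by
      intro v
      have ht := aux_tangent (x := (ρ v : ℝ)) (d := (G.degree v : ℝ)) (Nat.cast_nonneg _)
        (by exact_mod_cast aux_indeg_le_deg G f hf v)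
      rw [Real.logb, Real.logb]
      have heq : (ρ v : ℝ) * (Real.log (G.degree v) / Real.log 2)
          - (ρ v : ℝ) * (Real.log (ρ v) / Real.log 2)
          = ((ρ v : ℝ) * Real.log (G.degree v) - (ρ v : ℝ) * Real.log (ρ v)) / Real.log 2 := by
        ring
      rw [heq]
      exact (div_le_div_iff_of_pos_right hlog2).mpr ht
    have h6 : ∑ v : V, ((ρ v : ℝ) * Real.logb 2 (G.degree v) - (ρ v : ℝ) * Real.logb 2 (ρ v))
        ≤ ∑ v : V, ((G.degree v : ℝ) / 2 + (Real.log 2 - 1) * (ρ v : ℝ)) / Real.log 2 :=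
      Finset.sum_le_sum fun v _ => hterm v
    rw [Finset.sum_sub_distrib] at h6
    have h7 : ∑ v : V, ((G.degree v : ℝ) / 2 + (Real.log 2 - 1) * (ρ v : ℝ)) / Real.log 2
        = (m : ℝ) := by
      rw [← Finset.sum_div, Finset.sum_add_distrib, ← Finset.sum_div, ← Finset.mul_sum,
        hsum_deg, hsum_ρ]
      field_simp
      ring
    rw [h7] at h6
    linarith
  linarith

section Prob
variable {V : Type} [Fintype V] [Nonempty V] [MeasurableSpace V] [MeasurableSingletonClass V]

lemma aux_map_eval (s : ℕ) (i : Fin s) (A : Set V) :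
    MeasureTheory.Measure.pi (fun _ : Fin s => (PMF.uniformOfFintype V).toMeasure)
      (Function.eval i ⁻¹' A) = (PMF.uniformOfFintype V).toMeasure A := by
  rw [Set.eval_preimage, MeasureTheory.Measure.pi_pi]
  rw [Finset.prod_eq_single i (fun j _ hj => by
    rw [Function.update_of_ne hj]; simp) (fun h => absurd (Finset.mem_univ i) h)]
  rw [Function.update_self]

lemma aux_eval_map (s : ℕ) (i : Fin s) :
    (MeasureTheory.Measure.pi fun _ : Fin s => (PMF.uniformOfFintype V).toMeasure).map
      (Function.eval i) = (PMF.uniformOfFintype V).toMeasure := by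
  refine MeasureTheory.Measure.ext fun A hA => ?_
  rw [MeasureTheory.Measure.map_apply (measurable_pi_apply i) hA]
  exact aux_map_eval s i A

lemma aux_indep (s : ℕ) (i j : Fin s) (hij : i ≠ j) :
    ProbabilityTheory.IndepFun (Function.eval i) (Function.eval j)
      (MeasureTheory.Measure.pi fun _ : Fin s => (PMF.uniformOfFintype V).toMeasure) := by
  set ν := (PMF.uniformOfFintype V).toMeasure with hν
  rw [ProbabilityTheory.indepFun_iff_measure_inter_preimage_eq_mul]
  intro A B hA hB
  have hset : Function.eval i ⁻¹' A ∩ Function.eval j ⁻¹' B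
      = Set.pi Set.univ (Function.update (Function.update (fun _ : Fin s => (Set.univ : Set V)) i A) j B) := by
    ext ω
    simp only [Set.mem_inter_iff, Set.mem_preimage, Set.mem_pi, Set.mem_univ, true_implies]
    constructor
    · rintro ⟨h1, h2⟩ k
      rcases eq_or_ne k j with rfl | hkj
      · rwa [Function.update_self]
      rcases eq_or_ne k i with rfl | hki
      · rwa [Function.update_of_ne hkj, Function.update_self]
      · rw [Function.update_of_ne hkj, Function.update_of_ne hki]; trivial
    · intro h
      refine ⟨?_, ?_⟩
      · have := h i
        rwa [Function.update_of_ne hij, Function.update_self] at this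
      · have := h j
        rwa [Function.update_self] at this
  rw [hset, MeasureTheory.Measure.pi_pi]
  rw [← Finset.mul_prod_erase Finset.univ _ (Finset.mem_univ j),
    ← Finset.mul_prod_erase (Finset.univ.erase j) _ (Finset.mem_erase.mpr ⟨hij, Finset.mem_univ i⟩)]
  rw [Finset.prod_eq_one (fun k hk => by
    rcases Finset.mem_erase.mp hk with ⟨hki, hk2⟩
    rcases Finset.mem_erase.mp hk2 with ⟨hkj, _⟩
    rw [Function.update_of_ne hkj, Function.update_of_ne hki]
    simp [ν])]
  rw [Function.update_self, Function.update_of_ne hij, Function.update_self]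
  rw [aux_map_eval s i A, aux_map_eval s j B]
  simp [ν, mul_comm]

lemma aux_integral (s : ℕ) (i : Fin s) (g : V → ℝ) :
    ∫ ω, g (ω i) ∂(MeasureTheory.Measure.pi fun _ : Fin s => (PMF.uniformOfFintype V).toMeasure)
      = (∑ v : V, g v) / Fintype.card V := by
  have hg : Measurable g := measurable_of_countable g
  have h1 : ∫ ω, g (ω i) ∂(MeasureTheory.Measure.pi fun _ : Fin s => (PMF.uniformOfFintype V).toMeasure)
      = ∫ v, g v ∂((MeasureTheory.Measure.pi fun _ : Fin s =>
        (PMF.uniformOfFintype V).toMeasure).map (Function.eval i)) :=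
    (MeasureTheory.integral_map (measurable_pi_apply i).aemeasurable
      hg.aestronglyMeasurable).symm
  rw [h1, aux_eval_map s i]
  rw [MeasureTheory.integral_fintype (MeasureTheory.Integrable.of_finite)]
  have h3 : ∀ v : V, ((PMF.uniformOfFintype V).toMeasure {v}).toReal
      = ((Fintype.card V : ℝ))⁻¹ := by
    intro v
    rw [PMF.toMeasure_apply_singleton _ _ (measurableSet_singleton v)]
    simp [PMF.uniformOfFintype_apply, ENNReal.toReal_inv]
  have h2 : ∀ v : V, (((PMF.uniformOfFintype V).toMeasure.real {v}) • g v)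
      = ((Fintype.card V : ℝ))⁻¹ * g v := fun v => by rw [Measure.real, h3 v, smul_eq_mul]
  rw [Finset.sum_congr rfl fun v _ => h2 v, ← Finset.mul_sum, div_eq_mul_inv, mul_comm]

end Prob

lemma aux_arith {b ε sr mr nr var : ℝ} (hb : 0 < b) (hε : 0 < ε) (hs : 0 < sr)
    (hn : 0 < nr) (hnm : nr ≤ mr) (hsε : 3*b^2 ≤ sr*ε^2) (hvar : var ≤ sr*(b/2)^2) :
    var / (ε*sr*mr/nr)^2 ≤ 1/3 := by
  have hm : 0 < mr := lt_of_lt_of_le hn hnm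
  rw [div_le_iff₀ (by positivity)]
  have e1 : (ε*sr*mr/nr)^2 = (ε^2 * sr^2) * (mr/nr)^2 := by field_simp
  have e2 : (1:ℝ) ≤ (mr/nr)^2 := by
    have h1 : (1:ℝ) ≤ mr/nr := (one_le_div hn).mpr hnm
    nlinarith
  have e3 : sr*(b/2)^2 ≤ 1/3*(ε^2*sr^2) := by nlinarith
  nlinarith [mul_le_mul_of_nonneg_left e2 (by positivity : (0:ℝ) ≤ 1/3*(ε^2*sr^2))]

/-- Constant-time approximation of the minimum orientation entropy: there is an
absolute constant `c` such that for any graph with `n ≤ m` edges and maximum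
degree `Δ`, sampling `s ≥ c (Δ log Δ)²/ε²` vertices uniformly and independently
and forming `H := log m − (n/(sm)) ∑ᵢ ρ(vᵢ) log ρ(vᵢ)` from the indegrees `ρ` of
a fixed biased orientation gives, with probability at least `2/3`,
`OPT ≤ H + ε` and `H ≤ OPT + 1 + ε`. -/
theorem stmt_9 :
    ∃ c : ℝ, 0 < c ∧
      ∀ (V : Type) [Fintype V] [DecidableEq V] [Nonempty V]
        [MeasurableSpace V] [MeasurableSingletonClass V]
        (G : SimpleGraph V) [DecidableRel G.Adj]
        (n m Δ : ℕ),
        n = Fintype.card V → m = G.edgeFinset.card → n ≤ m →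
        (∀ v, G.degree v ≤ Δ) →
        ∀ f : Sym2 V → V, (∀ e ∈ G.edgeFinset, f e ∈ e) →
        (∀ v w, G.Adj v w → G.degree w < G.degree v → f s(v, w) = v) →
        ∀ OPT : ℝ,
          IsLeast {h : ℝ | ∃ f' : Sym2 V → V, (∀ e ∈ G.edgeFinset, f' e ∈ e) ∧
            h = -∑ v : V, (((G.edgeFinset.filter (fun e => f' e = v)).card : ℝ) / m) *
              Real.logb 2 (((G.edgeFinset.filter (fun e => f' e = v)).card : ℝ) / m)} OPT →
        ∀ ε : ℝ, 0 < ε →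
        ∀ s : ℕ, c * ((Δ : ℝ) * Real.logb 2 Δ) ^ 2 / ε ^ 2 ≤ s →
        ∀ H : (Fin s → V) → ℝ,
          (H = fun ω => Real.logb 2 m - ((n : ℝ) / (s * m)) *
            ∑ i : Fin s, ((G.edgeFinset.filter (fun e => f e = ω i)).card : ℝ) *
              Real.logb 2 ((G.edgeFinset.filter (fun e => f e = ω i)).card : ℝ)) →
          (2 : ℝ≥0∞) / 3 ≤
            (MeasureTheory.Measure.pi fun _ : Fin s => (PMF.uniformOfFintype V).toMeasure)
              {ω | OPT ≤ H ω + ε ∧ H ω ≤ OPT + 1 + ε} := by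
  refine ⟨3, by norm_num, ?_⟩
  intro V _ _ _ _ _ G _ n m Δ hn hm hnm hΔ f hf hbias OPT hOPT ε hε s hs H hH
  classical
  set μ := MeasureTheory.Measure.pi fun _ : Fin s => (PMF.uniformOfFintype V).toMeasure with hμ
  set b : ℝ := (Δ : ℝ) * Real.logb 2 Δ with hbdef
  have hn0 : 0 < n := hn ▸ Fintype.card_pos
  have hm0 : 0 < m := lt_of_lt_of_le hn0 hnm
  have hmR : (0:ℝ) < m := by exact_mod_cast hm0
  have hnR : (0:ℝ) < n := by exact_mod_cast hn0
  have hmnR : (n:ℝ) ≤ m := by exact_mod_cast hnm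
  -- Δ ≥ 2
  have hΔ2 : 2 ≤ Δ := by
    by_contra hcon
    push_neg at hcon
    have hall : ∀ v : V, G.degree v ≤ 1 := fun v => le_trans (hΔ v) (by omega)
    have h1 : ∑ v : V, G.degree v = 2 * m := by rw [G.sum_degrees_eq_twice_card_edges, hm]
    have h2 : ∑ v : V, G.degree v ≤ ∑ _v : V, 1 := Finset.sum_le_sum fun v _ => hall v
    rw [h1, Finset.sum_const, smul_eq_mul, mul_one, Finset.card_univ, ← hn] at h2
    omega
  have hlogΔ : 1 ≤ Real.logb 2 Δ := by
    have h1 : Real.logb 2 2 ≤ Real.logb 2 Δ :=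
      Real.logb_le_logb_of_le one_lt_two (by norm_num) (by exact_mod_cast hΔ2)
    rwa [Real.logb_self_eq_one one_lt_two] at h1
  have hΔR : (2:ℝ) ≤ Δ := by exact_mod_cast hΔ2
  have hb2 : (2:ℝ) ≤ b := by nlinarith
  have hb0 : (0:ℝ) < b := by linarith
  -- s positive
  have hs0R : (0:ℝ) < s := by
    have : (0:ℝ) < 3 * b ^ 2 / ε ^ 2 := by positivity
    calc (0:ℝ) < 3 * b ^ 2 / ε ^ 2 := this
    _ ≤ s := hs
  have hsR : (0:ℝ) < (s:ℝ) := hs0R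
  -- indegree function
  set ρ : V → ℕ := fun v => (G.edgeFinset.filter (fun e => f e = v)).card with hρdef
  set g : V → ℝ := fun v => (ρ v : ℝ) * Real.logb 2 (ρ v) with hgdef
  set S : ℝ := ∑ v : V, g v with hSdef
  set Hb : ℝ := Real.logb 2 m - (1/m) * S with hHbdef
  have hρΔ : ∀ v, ρ v ≤ Δ := fun v => le_trans (aux_indeg_le_deg G f hf v) (hΔ v)
  have hg0 : ∀ v, 0 ≤ g v := by
    intro v
    rcases Nat.eq_zero_or_pos (ρ v) with h | h
    · simp [hgdef, h]
    · exact mul_nonneg (Nat.cast_nonneg _)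
        (Real.logb_nonneg one_lt_two (by exact_mod_cast h))
  have hgb : ∀ v, g v ≤ b := by
    intro v
    rcases Nat.eq_zero_or_pos (ρ v) with h | h
    · simp [hgdef, h]; linarith
    · refine mul_le_mul (by exact_mod_cast hρΔ v)
        (Real.logb_le_logb_of_le one_lt_two (by exact_mod_cast h) (by exact_mod_cast hρΔ v))
        (Real.logb_nonneg one_lt_two (by exact_mod_cast h)) (by linarith)
  -- OPT bounds
  have hsumρ : ∑ v, ρ v = m := by rw [hρdef, aux_sum_indeg G f, hm]
  have hOPT_le : OPT ≤ Hb := by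
    have hmem : OPT ≤ -∑ v : V, (((G.edgeFinset.filter (fun e => f e = v)).card : ℝ) / m) *
        Real.logb 2 (((G.edgeFinset.filter (fun e => f e = v)).card : ℝ) / m) :=
      hOPT.2 ⟨f, hf, rfl⟩
    rwa [aux_entropy_eq ρ m hm0 hsumρ] at hmem
  have hHb_le : Hb ≤ OPT + 1 := by
    obtain ⟨f', hf', hOPTeq⟩ := hOPT.1
    have hsumρ' : ∑ v, (G.edgeFinset.filter (fun e => f' e = v)).card = m := by
      rw [aux_sum_indeg G f', hm]
    rw [hOPTeq, aux_entropy_eq _ m hm0 hsumρ']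
    have hk := aux_key G f f' hf hbias hf'
    rw [← hm] at hk
    have hSk : ∑ v : V, ((G.edgeFinset.filter (fun e => f' e = v)).card : ℝ) *
        Real.logb 2 ((G.edgeFinset.filter (fun e => f' e = v)).card : ℝ) ≤ S + m := hk
    rw [hHbdef]
    have h9 : (1/(m:ℝ)) * (S + m) = (1/m)*S + 1 := by field_simp
    have h10 : (1/(m:ℝ)) * (∑ v : V, ((G.edgeFinset.filter (fun e => f' e = v)).card : ℝ) *
        Real.logb 2 ((G.edgeFinset.filter (fun e => f' e = v)).card : ℝ)) ≤ (1/m)*S + 1 := by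
      rw [← h9]
      exact mul_le_mul_of_nonneg_left hSk (by positivity)
    linarith
  -- probability part
  subst hH
  have hmeasg : Measurable g := measurable_of_countable g
  set X : Fin s → (Fin s → V) → ℝ := fun i ω => g (ω i) with hXdef
  set T : (Fin s → V) → ℝ := fun ω => ∑ i : Fin s, g (ω i) with hTdef
  have hTX : T = ∑ i : Fin s, X i := by
    funext ω
    rw [Finset.sum_apply]
  have hXmeas : ∀ i, Measurable (X i) := fun i => measurable_of_countable _
  have hXmem : ∀ i : Fin s, MemLp (X i) 2 μ := fun i =>
    memLp_of_bounded (ae_of_all _ fun ω => ⟨hg0 _, hgb _⟩) (hXmeas i).aestronglyMeasurable 2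
  have hTmem : MemLp T 2 μ := by
    rw [hTX]; exact memLp_finset_sum' _ fun i _ => hXmem i
  have hEX : ∀ i, ∫ ω, X i ω ∂μ = S / n := by
    intro i
    rw [hn]
    exact aux_integral s i g
  have hET : ∫ ω, T ω ∂μ = s * (S / n) := by
    have h1 : ∫ ω, T ω ∂μ = ∑ i : Fin s, ∫ ω, X i ω ∂μ := by
      rw [hTX]
      rw [show (∫ ω, (∑ i : Fin s, X i) ω ∂μ) = ∫ ω, (∑ i : Fin s, X i ω) ∂μ by
        simp [Finset.sum_apply]]
      exact MeasureTheory.integral_finset_sum _ (fun i _ => (hXmem i).integrable one_le_two)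
    rw [h1, Finset.sum_congr rfl (fun i _ => hEX i), Finset.sum_const, Finset.card_univ,
      Fintype.card_fin, nsmul_eq_mul]
  have hvar_i : ∀ i, variance (X i) μ ≤ (b/2)^2 := by
    intro i
    have h := variance_le_sq_of_bounded (μ := μ) (a := 0) (b := b)
      (ae_of_all _ fun ω => ⟨hg0 _, hgb _⟩) (hXmeas i).aemeasurable
    simpa using h
  have hpair : Set.Pairwise ↑(Finset.univ : Finset (Fin s))
      (fun i j => IndepFun (X i) (X j) μ) := by
    intro i _ j _ hij
    exact (aux_indep s i j hij).comp hmeasg hmeasg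
  have hvarT : variance T μ ≤ s * (b/2)^2 := by
    rw [hTX, IndepFun.variance_sum (fun i _ => hXmem i) hpair]
    calc ∑ i : Fin s, variance (X i) μ ≤ ∑ _i : Fin s, (b/2)^2 :=
          Finset.sum_le_sum (fun i _ => hvar_i i)
    _ = s*(b/2)^2 := by rw [Finset.sum_const, Finset.card_univ, Fintype.card_fin, nsmul_eq_mul]
  set c₀ : ℝ := ε * s * m / n with hc₀def
  have hc₀ : 0 < c₀ := by positivity
  have hcheb := meas_ge_le_variance_div_sq (μ := μ) hTmem hc₀
  have hsε : 3 * b^2 ≤ s * ε^2 := by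
    have h := (div_le_iff₀ (by positivity : (0:ℝ) < ε^2)).mp hs
    linarith
  have hratio : variance T μ / c₀^2 ≤ 1/3 := by
    rw [hc₀def]
    exact aux_arith hb0 hε hsR hnR hmnR hsε hvarT
  set bad : Set (Fin s → V) := {ω | c₀ ≤ |T ω - ∫ ω, T ω ∂μ|} with hbaddef
  have hbad_le : μ bad ≤ 1/3 := by
    refine le_trans hcheb ?_
    rw [show (1/3 : ℝ≥0∞) = ENNReal.ofReal (1/3) by
      rw [ENNReal.ofReal_div_of_pos (by norm_num)]; norm_num]
    exact ENNReal.ofReal_le_ofReal hratio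
  have hgood : badᶜ ⊆ {ω | OPT ≤ (fun ω => Real.logb 2 m - ((n : ℝ) / (s * m)) *
      ∑ i : Fin s, ((G.edgeFinset.filter (fun e => f e = ω i)).card : ℝ) *
        Real.logb 2 ((G.edgeFinset.filter (fun e => f e = ω i)).card : ℝ)) ω + ε ∧
      (fun ω => Real.logb 2 m - ((n : ℝ) / (s * m)) *
      ∑ i : Fin s, ((G.edgeFinset.filter (fun e => f e = ω i)).card : ℝ) *
        Real.logb 2 ((G.edgeFinset.filter (fun e => f e = ω i)).card : ℝ)) ω
      ≤ OPT + 1 + ε} := by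
    intro ω hω
    simp only [Set.mem_compl_iff, hbaddef, Set.mem_setOf_eq, not_le] at hω
    have hHω : (fun ω => Real.logb 2 m - ((n : ℝ) / (s * m)) *
        ∑ i : Fin s, ((G.edgeFinset.filter (fun e => f e = ω i)).card : ℝ) *
          Real.logb 2 ((G.edgeFinset.filter (fun e => f e = ω i)).card : ℝ)) ω
        = Real.logb 2 m - ((n : ℝ) / (s * m)) * T ω := rfl
    have hdev : |(Real.logb 2 m - ((n : ℝ) / (s * m)) * T ω) - Hb| < ε := by
      have h1 : (Real.logb 2 m - ((n : ℝ) / (s * m)) * T ω) - Hb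
          = ((n:ℝ)/(s*m)) * ((∫ ω, T ω ∂μ) - T ω) := by
        rw [hHbdef, hET]
        field_simp
        ring
      rw [h1, abs_mul, abs_of_pos (by positivity : (0:ℝ) < (n:ℝ)/(s*m))]
      have h2 : |(∫ ω, T ω ∂μ) - T ω| < c₀ := by rwa [abs_sub_comm]
      have h3 : ((n:ℝ)/(s*m)) * |(∫ ω, T ω ∂μ) - T ω| < ((n:ℝ)/(s*m)) * c₀ :=
        mul_lt_mul_of_pos_left h2 (by positivity)
      have h4 : ((n:ℝ)/(s*m)) * c₀ = ε := by rw [hc₀def]; field_simp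
      linarith
    rw [Set.mem_setOf_eq, hHω]
    rw [abs_lt] at hdev
    obtain ⟨hd1, hd2⟩ := hdev
    have hb1 : Hb < (Real.logb 2 m - ((n : ℝ) / (s * m)) * T ω) + ε := by linarith
    have hb2 : (Real.logb 2 m - ((n : ℝ) / (s * m)) * T ω) < Hb + ε := by linarith
    exact ⟨le_trans hOPT_le hb1.le, le_trans hb2.le (add_le_add_left hHb_le ε)⟩
  have hbadmeas : MeasurableSet bad := (Set.toFinite bad).measurableSet
  have h13 : (2:ℝ≥0∞)/3 + 1/3 = 1 := by
    rw [ENNReal.div_add_div_same]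
    norm_num
    rw [ENNReal.div_self] <;> norm_num
  have hsub : (1:ℝ≥0∞) - 1/3 = 2/3 :=
    ENNReal.sub_eq_of_eq_add (by norm_num) h13.symm
  calc (2:ℝ≥0∞)/3 = 1 - 1/3 := hsub.symm
  _ ≤ 1 - μ bad := tsub_le_tsub_left hbad_le 1
  _ = μ badᶜ := (prob_compl_eq_one_sub hbadmeas).symm
  _ ≤ _ := measure_mono hgood
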